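/- Let k ≥ 1 and let G be a bipartite graph of order n ≥ 2k+2 containing no cycle on 2k+2 vertices. Then for every vertex u of G, the number of walks of length 2 in G starting at u is at most k(n−k); equivalently, |N(u)| + e(N(u), N²(u)) ≤ k(n−k), where the first quantity equals the u-th row sum of A(G)². -/

import Mathlib

open SimpleGraph Finset

/-- A graph is bipartite if its vertices can be two-colored so that every edge joins the two
color classes. -/
def IsBipartite {V : Type*} (G : SimpleGraph V) : Prop :=
  ∃ s : Set V, ∀ ⦃v w : V⦄, G.Adj v w → (v ∈ s ↔ w ∉ s)

/-- `G` contains a cycle on `t` vertices. -/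
def HasCycleOn {V : Type*} (G : SimpleGraph V) (t : ℕ) : Prop :=
  ∃ (a : V) (p : G.Walk a a), p.IsCycle ∧ p.length = t

/-- The set `N²(u)` of vertices at distance exactly 2 from `u`. -/
def distTwoSet {V : Type*} [Fintype V] [DecidableEq V]
    (G : SimpleGraph V) [DecidableRel G.Adj] (u : V) : Finset V :=
  Finset.univ.filter fun v => ¬ G.Adj u v ∧ v ≠ u ∧ ∃ w : V, G.Adj u w ∧ G.Adj w v

/-- `e(s, t)`: the number of edges of `G` with one endpoint in `s` and the other in `t`
(for disjoint `s` and `t`). -/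
def interEdges {V : Type*} [Fintype V] [DecidableEq V]
    (G : SimpleGraph V) [DecidableRel G.Adj] (s t : Finset V) : ℕ :=
  ((s ×ˢ t).filter fun p => G.Adj p.1 p.2).card

set_option linter.unusedSectionVars false
set_option linter.unusedVariables false
set_option maxHeartbeats 1000000

section Aux

variable {V : Type*} [DecidableEq V] {G : SimpleGraph V}

lemma myWalkColor {S : Set V} (hb : ∀ ⦃v w : V⦄, G.Adj v w → (v ∈ S ↔ w ∉ S)) :
    ∀ {a b : V} (p : G.Walk a b), (b ∈ S ↔ (Even p.length ↔ a ∈ S)) := by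
  intro a b p
  induction p with
  | nil => simp
  | cons h q ih =>
    have h1 := hb h
    rw [Walk.length_cons, Nat.even_add_one]
    tauto

lemma mySupportGetLast : ∀ {a b : V} (p : G.Walk a b) (h : p.support ≠ []),
    p.support.getLast h = b := by
  intro a b p
  induction p with
  | nil => simp
  | cons h q ih =>
    intro hne
    simp only [Walk.support_cons]
    rw [List.getLast_cons (by simp)]
    exact ih _

lemma myPathStartNe {a b : V} {p : G.Walk a b} (hp : p.IsPath) (hl : p.length ≠ 0) : a ≠ b := by
  rintro rfl
  rw [Walk.isPath_iff_eq_nil] at hp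
  subst hp
  simp at hl

lemma myPrefix : ∀ {a b : V} (p : G.Walk a b) (j : ℕ), j ≤ p.length →
    ∃ (y : V) (r : G.Walk a y), r.length = j ∧ r.support <+: p.support := by
  intro a b p
  induction p with
  | nil =>
    intro j hj
    simp only [Walk.length_nil, Nat.le_zero] at hj
    subst hj
    exact ⟨_, Walk.nil, rfl, by simp⟩
  | cons h q ih =>
    intro j hj
    match j with
    | 0 =>
      refine ⟨_, Walk.nil, rfl, ?_⟩
      rw [Walk.support_cons, Walk.support_nil]
      exact ⟨_, rfl⟩
    | (j+1) =>
      obtain ⟨y, r, hlen, hpre⟩ := ih j (by simpa using hj)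
      refine ⟨y, Walk.cons h r, by simp [hlen], ?_⟩
      obtain ⟨t, ht⟩ := hpre
      rw [Walk.support_cons, Walk.support_cons]
      exact ⟨t, by rw [List.cons_append, ht]⟩

lemma myEdgeNotMem {a b : V} {q : G.Walk a b} (hq : q.IsPath) (h2 : 2 ≤ q.length) :
    s(b, a) ∉ q.edges := by
  intro hmem
  cases q with
  | nil => simp at h2
  | @cons a w b h q1 =>
    rw [Walk.edges_cons, List.mem_cons] at hmem
    have hq1 : q1.IsPath := hq.of_cons
    have hanot : a ∉ q1.support := ((Walk.cons_isPath_iff h q1).mp hq).2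
    rcases hmem with heq | hmem
    · rw [Sym2.eq_iff] at heq
      rcases heq with ⟨hb, ha⟩ | ⟨hb, _⟩
      · exact myPathStartNe hq (by omega) (by rw [hb])
      · subst hb
        rw [Walk.isPath_iff_eq_nil] at hq1
        subst hq1
        simp at h2
    · exact hanot (Walk.snd_mem_support_of_mem_edges q1 hmem)

lemma myMaxPathAux (s : Finset V) :
    ∀ (m : ℕ) {a b : V} (p : G.Walk a b), p.IsPath → (∀ x ∈ p.support, x ∈ s) →
    s.card ≤ p.length + m →
    ∃ (a' : V) (p' : G.Walk a' b), p'.IsPath ∧ (∀ x ∈ p'.support, x ∈ s) ∧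
      (∀ y ∈ s, G.Adj a' y → y ∈ p'.support) := by
  intro m
  induction m with
  | zero =>
    intro a b p hp hsub hcard
    exfalso
    have h1 : p.support.toFinset ⊆ s := fun x hx => hsub x (List.mem_toFinset.mp hx)
    have h2 : p.support.toFinset.card = p.length + 1 := by
      rw [List.toFinset_card_of_nodup hp.support_nodup, Walk.length_support]
    have := Finset.card_le_card h1
    omega
  | succ m ih =>
    intro a b p hp hsub hcard
    by_cases hex : ∃ y, y ∈ s ∧ G.Adj a y ∧ y ∉ p.support
    · obtain ⟨y, hy, hadj, hns⟩ := hex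
      refine ih (Walk.cons hadj.symm p) (hp.cons hns) ?_ (by rw [Walk.length_cons]; omega)
      intro x hx
      rw [Walk.support_cons, List.mem_cons] at hx
      rcases hx with rfl | hx
      · exact hy
      · exact hsub x hx
    · push_neg at hex
      exact ⟨a, p, hp, hsub, fun y hy hadj => hex y hy hadj⟩

lemma myMaxPath (s : Finset V) {v₀ : V} (hv₀ : v₀ ∈ s) :
    ∃ (a b : V) (p : G.Walk a b), p.IsPath ∧ (∀ x ∈ p.support, x ∈ s) ∧
      (∀ y ∈ s, G.Adj a y → y ∈ p.support) := by
  obtain ⟨a, p, h1, h2, h3⟩ := myMaxPathAux s s.card (Walk.nil' v₀) (Walk.IsPath.nil)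
    (by simp [hv₀]) (by simp)
  exact ⟨a, v₀, p, h1, h2, h3⟩

lemma myLongCycle {S : Set V} (hb : ∀ ⦃v w : V⦄, G.Adj v w → (v ∈ S ↔ w ∉ S))
    [DecidableRel G.Adj] {k : ℕ} (hk : 1 ≤ k) (s : Finset V) (hne : s.Nonempty)
    (hmin : ∀ v ∈ s, k + 1 ≤ (s.filter (G.Adj v)).card) :
    ∃ (a : V) (c : G.Walk a a), c.IsCycle ∧ 2 * k + 2 ≤ c.length := by
  classical
  obtain ⟨v₀, hv₀⟩ := hne
  obtain ⟨a, b, p, hp, hsub, hmax⟩ := myMaxPath (G := G) s hv₀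
  have ha : a ∈ s := hsub a p.start_mem_support
  set Nb := s.filter (G.Adj a) with hNb
  have hNbcard : k + 1 ≤ Nb.card := hmin a ha
  have hNbsup : ∀ y ∈ Nb, y ∈ p.support := fun y hy =>
    hmax y (Finset.mem_filter.mp hy).1 (Finset.mem_filter.mp hy).2
  -- index function
  set g : V → ℕ := fun y => if h : y ∈ p.support then (p.takeUntil y h).length else 0 with hg
  have hgodd : ∀ y ∈ Nb, ¬ Even (g y) := by
    intro y hy hev
    have hadj : G.Adj a y := (Finset.mem_filter.mp hy).2
    have hmem := hNbsup y hy
    have hcol := myWalkColor hb (p.takeUntil y hmem)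
    rw [hg] at hev
    simp only [dif_pos hmem] at hev
    have := hb hadj
    tauto
  have hgsup : ∀ y ∈ Nb, ((h : y ∈ p.support) → (p.takeUntil y h).support <+: p.support) := by
    intro y hy h
    exact ⟨(p.dropUntil y h).support.tail, by
      rw [← Walk.support_append, Walk.take_spec]⟩
  have hginj : ∀ y₁ ∈ Nb, ∀ y₂ ∈ Nb, g y₁ = g y₂ → y₁ = y₂ := by
    intro y₁ hy₁ y₂ hy₂ heq
    have h₁ := hNbsup y₁ hy₁
    have h₂ := hNbsup y₂ hy₂
    rw [hg] at heq
    simp only [dif_pos h₁, dif_pos h₂] at heq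
    have hp₁ := hgsup y₁ hy₁ h₁
    have hp₂ := hgsup y₂ hy₂ h₂
    have hlen : (p.takeUntil y₁ h₁).support.length = (p.takeUntil y₂ h₂).support.length := by
      rw [Walk.length_support, Walk.length_support, heq]
    have hseq : (p.takeUntil y₁ h₁).support = (p.takeUntil y₂ h₂).support := by
      have := List.prefix_of_prefix_length_le hp₁ hp₂ (le_of_eq hlen)
      exact List.IsPrefix.eq_of_length this hlen
    have e₁ := mySupportGetLast (p.takeUntil y₁ h₁) (by simp)
    have e₂ := mySupportGetLast (p.takeUntil y₂ h₂) (by simp)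
    rw [← e₁, ← e₂]
    congr 1
  -- find y with g y ≥ 2k+1
  have hbig : ∃ y ∈ Nb, 2 * k + 1 ≤ g y := by
    by_contra hc
    push_neg at hc
    have himg : ∀ y ∈ Nb, g y ∈ (Finset.range k).image (fun t => 2 * t + 1) := by
      intro y hy
      have hodd := hgodd y hy
      have hlt := hc y hy
      rw [Nat.not_even_iff_odd] at hodd
      obtain ⟨t, ht⟩ := hodd
      refine Finset.mem_image.mpr ⟨t, Finset.mem_range.mpr (by omega), by omega⟩
    have := Finset.card_le_card_of_injOn g himg (fun y₁ h₁ y₂ h₂ => hginj y₁ h₁ y₂ h₂)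
    rw [Finset.card_image_of_injective _ (fun t₁ t₂ h => by omega)] at this
    rw [Finset.card_range] at this
    omega
  obtain ⟨y, hy, hylen⟩ := hbig
  have hmem := hNbsup y hy
  have hadj : G.Adj a y := (Finset.mem_filter.mp hy).2
  set q := p.takeUntil y hmem with hq
  have hqlen : 2 * k + 1 ≤ q.length := by
    rw [hg] at hylen; simpa [dif_pos hmem] using hylen
  have hqpath : q.IsPath := hp.takeUntil hmem
  refine ⟨y, Walk.cons hadj.symm q, ?_, ?_⟩
  · rw [Walk.cons_isCycle_iff]
    exact ⟨hqpath, myEdgeNotMem hqpath (by omega)⟩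
  · rw [Walk.length_cons]; omega

variable [DecidableRel G.Adj]

/-- ordered adjacent pair count inside `s`. -/
def eno (G : SimpleGraph V) [DecidableRel G.Adj] (s : Finset V) : ℕ :=
  ((s ×ˢ s).filter fun p => G.Adj p.1 p.2).card

lemma myCardFilterProd (s t : Finset V) (R : V → V → Prop) [DecidableRel R] :
    ((s ×ˢ t).filter fun p => R p.1 p.2).card = ∑ a ∈ s, (t.filter fun b => R a b).card := by
  rw [Finset.card_filter]
  rw [Finset.sum_product]
  congr 1
  ext a
  rw [Finset.card_filter]

lemma myEnoSum (s : Finset V) : eno G s = ∑ a ∈ s, (s.filter fun b => G.Adj a b).card :=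
  myCardFilterProd s s G.Adj

lemma myEnoErase {s : Finset V} {v : V} (hv : v ∈ s) :
    eno G s = eno G (s.erase v) + 2 * (s.filter (G.Adj v)).card := by
  rw [myEnoSum, myEnoSum]
  rw [← Finset.add_sum_erase s _ hv]
  have hins : s = insert v (s.erase v) := (Finset.insert_erase hv).symm
  have hfv : ∀ a, (s.filter fun b => G.Adj a b) =
      if G.Adj a v then insert v ((s.erase v).filter fun b => G.Adj a b)
      else (s.erase v).filter fun b => G.Adj a b := by
    intro a
    conv_lhs => rw [hins]
    rw [Finset.filter_insert]
  have hstep : ∀ a ∈ s.erase v, (s.filter fun b => G.Adj a b).card =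
      ((s.erase v).filter fun b => G.Adj a b).card + if G.Adj a v then 1 else 0 := by
    intro a _
    rw [hfv a]
    by_cases h : G.Adj a v
    · rw [if_pos h, if_pos h, Finset.card_insert_of_notMem (by simp)]
    · rw [if_neg h, if_neg h, add_zero]
  rw [Finset.sum_congr rfl hstep, Finset.sum_add_distrib]
  have h1 : (s.filter fun b => G.Adj v b) = (s.erase v).filter fun b => G.Adj v b := by
    rw [hfv v, if_neg (G.irrefl)]
  have h2 : (∑ a ∈ s.erase v, if G.Adj a v then 1 else 0) =
      ((s.erase v).filter fun b => G.Adj v b).card := by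
    rw [Finset.card_filter]
    apply Finset.sum_congr rfl
    intro a _
    simp [G.adj_comm]
  rw [h1, h2]
  ring

lemma myEnoBipBound {S : Set V} [DecidablePred (· ∈ S)]
    (hb : ∀ ⦃v w : V⦄, G.Adj v w → (v ∈ S ↔ w ∉ S)) (s : Finset V) :
    eno G s ≤ 2 * ((s.filter fun x => x ∈ S).card * (s.filter fun x => x ∉ S).card) := by
  classical
  set A := s.filter fun x => x ∈ S
  set B := s.filter fun x => x ∉ S
  have hsub : ((s ×ˢ s).filter fun p => G.Adj p.1 p.2) ⊆ (A ×ˢ B) ∪ (B ×ˢ A) := by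
    intro p hp
    rw [Finset.mem_filter, Finset.mem_product] at hp
    obtain ⟨⟨h1, h2⟩, hadj⟩ := hp
    have := hb hadj
    rw [Finset.mem_union, Finset.mem_product, Finset.mem_product]
    by_cases h : p.1 ∈ S
    · exact Or.inl ⟨Finset.mem_filter.mpr ⟨h1, h⟩, Finset.mem_filter.mpr ⟨h2, by tauto⟩⟩
    · exact Or.inr ⟨Finset.mem_filter.mpr ⟨h1, h⟩, Finset.mem_filter.mpr ⟨h2, by tauto⟩⟩
  calc eno G s ≤ ((A ×ˢ B) ∪ (B ×ˢ A)).card := Finset.card_le_card hsub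
    _ ≤ (A ×ˢ B).card + (B ×ˢ A).card := Finset.card_union_le _ _
    _ = 2 * (A.card * B.card) := by rw [Finset.card_product, Finset.card_product]; ring

lemma myEnoBound {S : Set V} [DecidablePred (· ∈ S)] (hb : ∀ ⦃v w : V⦄, G.Adj v w → (v ∈ S ↔ w ∉ S))
    {k : ℕ} (hk : 1 ≤ k)
    (NoLong : ∀ (a : V) (c : G.Walk a a), c.IsCycle → c.length < 2 * k + 2) :
    ∀ s : Finset V, 2 * k ≤ s.card → eno G s ≤ 2 * (k * (s.card - k)) := by
  classical
  intro s
  induction s using Finset.strongInduction with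
  | _ s IH =>
    intro hcard
    rcases eq_or_lt_of_le hcard with heq | hlt
    · -- base case: |s| = 2k
      have hbd := myEnoBipBound hb s
      set a := (s.filter fun x => x ∈ S).card
      set b := (s.filter fun x => x ∉ S).card
      have hab : a + b = s.card := Finset.card_filter_add_card_filter_not _
      have k2 : a * b ≤ k * k := by
        have hab' : (a : ℤ) + b = 2 * k := by
          have : a + b = 2 * k := by omega
          exact_mod_cast congrArg (Nat.cast : ℕ → ℤ) this
        zify
        nlinarith [sq_nonneg ((a:ℤ) - b)]
      have : s.card - k = k := by omega
      rw [this]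
      omega
    · by_cases hlow : ∃ v ∈ s, (s.filter (G.Adj v)).card ≤ k
      · obtain ⟨v, hv, hdeg⟩ := hlow
        have hss : s.erase v ⊂ s := Finset.erase_ssubset hv
        have hcard' : (s.erase v).card = s.card - 1 := Finset.card_erase_of_mem hv
        have hIH := IH _ hss (by omega)
        rw [myEnoErase hv]
        have e1 : k * ((s.card - 1) - k) + k = k * (s.card - k) := by
          have : (s.card - 1 - k) + 1 = s.card - k := by omega
          calc k * ((s.card - 1) - k) + k = k * ((s.card - 1 - k) + 1) := by ring
            _ = k * (s.card - k) := by rw [this]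
        rw [hcard'] at hIH
        omega
      · push_neg at hlow
        obtain ⟨_, c, hc, hclen⟩ := myLongCycle hb hk s
          (Finset.card_pos.mp (by omega)) (fun v hv => hlow v hv)
        exact absurd (NoLong _ c hc) (by omega)

lemma myLengthRotate {a u : V} (c : G.Walk a a) (h : u ∈ c.support) :
    (c.rotate u h).length = c.length := by
  have hsp := congrArg Walk.length (c.take_spec h)
  rw [Walk.length_append] at hsp
  unfold Walk.rotate
  rw [Walk.length_append]
  omega

lemma myCycleDestruct {a : V} {c : G.Walk a a} (hc : c.IsCycle) :
    ∃ (w : V) (h : G.Adj a w) (q : G.Walk w a),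
      c = Walk.cons h q ∧ q.IsPath ∧ q.length + 1 = c.length := by
  cases c with
  | nil => exact absurd hc (by simp)
  | cons h q =>
    refine ⟨_, h, q, rfl, ?_, by simp⟩
    rw [Walk.isPath_def]
    simpa [Walk.support_cons] using hc.support_nodup

lemma myPrefixAvoid {a b : V} {q : G.Walk a b} (hq : q.support.Nodup) {l : List V}
    (hpre : l <+: q.support) (hlen : l.length < q.support.length) : b ∉ l := by
  obtain ⟨t, ht⟩ := hpre
  have htne : t ≠ [] := by
    rintro rfl
    rw [← ht] at hlen
    simp at hlen
  have hlast := mySupportGetLast q (by simp)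
  rw [← ht] at hq
  have h1 : q.support.getLast? = some b := by
    rw [List.getLast?_eq_getLast (by simp), hlast]
  have h2 : t.getLast? = some b := by
    rw [← ht, List.getLast?_append] at h1
    rcases ho : t.getLast? with _ | x
    · simp [List.getLast?_eq_none_iff.mp ho] at htne
    · rw [ho] at h1; simpa using h1
  intro hbl
  exact (List.disjoint_of_nodup_append hq) hbl (List.mem_of_getLast? h2)

variable [Fintype V]

def auxB (G : SimpleGraph V) [DecidableRel G.Adj] (u : V) : SimpleGraph V where
  Adj v w := G.Adj v w ∧ ((v ∈ G.neighborFinset u ∧ w ∈ insert u (distTwoSet G u)) ∨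
    (w ∈ G.neighborFinset u ∧ v ∈ insert u (distTwoSet G u)))
  symm := ⟨fun v w (h : G.Adj v w ∧ _) => ⟨h.1.symm, h.2.symm⟩⟩
  loopless := ⟨fun v h => G.loopless.irrefl v h.1⟩

instance (u : V) : DecidableRel (auxB G u).Adj := fun v w => by
  dsimp [auxB]; infer_instance

lemma myAuxBdisj (u : V) : ∀ x ∈ G.neighborFinset u, x ∉ insert u (distTwoSet G u) := by
  intro x hx hmem
  rw [mem_neighborFinset] at hx
  rw [Finset.mem_insert] at hmem
  rcases hmem with rfl | hmem
  · exact G.irrefl hx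
  · rw [distTwoSet, Finset.mem_filter] at hmem
    exact hmem.2.1 hx

lemma myAuxBbip (u : V) : ∀ ⦃v w : V⦄, (auxB G u).Adj v w →
    (v ∈ (↑(G.neighborFinset u) : Set V) ↔ w ∉ (↑(G.neighborFinset u) : Set V)) := by
  intro v w h
  obtain ⟨-, h2⟩ := h
  simp only [Finset.coe_mem, Set.mem_setOf_eq, Finset.mem_coe]
  rcases h2 with ⟨hv, hw⟩ | ⟨hw, hv⟩
  · have hw' : w ∉ G.neighborFinset u := fun hX => myAuxBdisj u w hX hw
    exact ⟨fun _ => hw', fun _ => hv⟩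
  · have hv' : v ∉ G.neighborFinset u := fun hX => myAuxBdisj u v hX hv
    exact ⟨fun h => absurd h hv', fun hnw => absurd hw hnw⟩

lemma myAuxBNoLong {u : V} {k : ℕ} (hk : 1 ≤ k) (hfree : ¬ HasCycleOn G (2 * k + 2))
    (a : V) (c : (auxB G u).Walk a a) (hc : c.IsCycle) : c.length < 2 * k + 2 := by
  by_contra hlen
  push_neg at hlen
  set X := G.neighborFinset u with hX
  -- extract a path of length 2k between two X-vertices avoiding u
  have key : ∃ (x y : V) (r : (auxB G u).Walk x y), r.IsPath ∧ r.length = 2 * k ∧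
      x ∈ X ∧ y ∈ X ∧ u ∉ r.support ∧ x ≠ y := by
    by_cases hmem : u ∈ c.support
    · -- rotate so the cycle starts at u
      have hc₁ := hc.rotate hmem
      have hlen₁ := myLengthRotate c hmem
      obtain ⟨w1, hadj, q, hcq, hqpath, hqlen⟩ := myCycleDestruct hc₁
      have hqlen' : 2 * k + 1 ≤ q.length := by omega
      have hw1X : w1 ∈ X := by
        rcases hadj.2 with ⟨huX, -⟩ | ⟨hw1, -⟩
        · exact absurd huX (fun h => G.irrefl ((mem_neighborFinset _ _ _).mp h))
        · exact hw1
      obtain ⟨y, r, hrlen, hrpre⟩ := myPrefix q (2 * k) (by omega)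
      have hrpath : r.IsPath := by
        rw [Walk.isPath_def]
        exact hrpre.sublist.nodup hqpath.support_nodup
      have hyX : y ∈ X := by
        have hcol := myWalkColor (myAuxBbip u) r
        rw [hrlen] at hcol
        have hev : Even (2 * k) := even_two_mul k
        exact Finset.mem_coe.mp
          (hcol.mpr ⟨fun _ => Finset.mem_coe.mpr hw1X, fun _ => hev⟩)
      have hur : u ∉ r.support := by
        have := myPrefixAvoid hqpath.support_nodup hrpre ?_
        · exact this
        · rw [Walk.length_support, Walk.length_support, hrlen]; omega
      refine ⟨w1, y, r, hrpath, hrlen, hw1X, hyX, hur, ?_⟩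
      exact myPathStartNe hrpath (by omega)
    · -- the cycle avoids u entirely; rotate to a vertex of X
      obtain ⟨w0, hadj0, q0, hcq0, -, -⟩ := myCycleDestruct hc
      have hexX : ∃ a', a' ∈ X ∧ a' ∈ c.support := by
        rcases hadj0.2 with ⟨haX, -⟩ | ⟨hwX, -⟩
        · exact ⟨a, haX, c.start_mem_support⟩
        · exact ⟨w0, hwX, by rw [hcq0, Walk.support_cons]; right; exact q0.start_mem_support⟩
      obtain ⟨a', ha'X, ha'mem⟩ := hexX
      have hc₁ := hc.rotate ha'mem
      have hlen₁ := myLengthRotate c ha'mem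
      have hu₁ : u ∉ (c.rotate a' ha'mem).support := by
        intro hu
        rw [Walk.support_eq_cons] at hu
        rcases List.mem_cons.mp hu with rfl | hu
        · exact hmem ha'mem
        · exact hmem (List.mem_of_mem_tail
            ((Walk.support_rotate c a' ha'mem).mem_iff.mp hu))
      obtain ⟨w1, hadj, q, hcq, hqpath, hqlen⟩ := myCycleDestruct hc₁
      have hqlen' : 2 * k + 1 ≤ q.length := by omega
      obtain ⟨y, r', hr'len, hr'pre⟩ := myPrefix q (2 * k - 1) (by omega)
      have hr'path : r'.IsPath := by
        rw [Walk.isPath_def]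
        exact hr'pre.sublist.nodup hqpath.support_nodup
      have ha'r' : a' ∉ r'.support := by
        have := myPrefixAvoid hqpath.support_nodup hr'pre ?_
        · exact this
        · rw [Walk.length_support, Walk.length_support, hr'len]; omega
      set r := Walk.cons hadj r' with hr
      have hrpath : r.IsPath := hr'path.cons ha'r'
      have hrlen : r.length = 2 * k := by rw [hr, Walk.length_cons, hr'len]; omega
      have hyX : y ∈ X := by
        have hcol := myWalkColor (myAuxBbip u) r
        rw [hrlen] at hcol
        have hev : Even (2 * k) := even_two_mul k
        exact Finset.mem_coe.mp
          (hcol.mpr ⟨fun _ => Finset.mem_coe.mpr ha'X, fun _ => hev⟩)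
      have hur : u ∉ r.support := by
        rw [hr, Walk.support_cons]
        intro hu
        rcases List.mem_cons.mp hu with rfl | hu
        · exact hmem ha'mem
        · -- u ∈ r'.support ⊆ q.support ⊆ (rotate).support
          apply hu₁
          rw [hcq, Walk.support_cons]
          right
          exact hr'pre.subset hu
      refine ⟨a', y, r, hrpath, hrlen, ha'X, hyX, hur, ?_⟩
      exact myPathStartNe hrpath (by omega)
  obtain ⟨x, y, r, hrpath, hrlen, hxX, hyX, hur, hxy⟩ := key
  -- transfer the path to G
  have hedges : ∀ e ∈ r.edges, e ∈ G.edgeSet := by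
    intro e he
    have hBe := r.edges_subset_edgeSet he
    induction e with
    | _ v w =>
      rw [mem_edgeSet] at hBe ⊢
      exact hBe.1
  set rG := r.transfer G hedges with hrG
  have hrGsup : rG.support = r.support := Walk.support_transfer r hedges
  have hrGlen : rG.length = 2 * k := by rw [Walk.length_transfer, hrlen]
  have hrGpath : rG.IsPath := by
    rw [Walk.isPath_def, hrGsup]
    exact hrpath.support_nodup
  have hux : G.Adj u x := (mem_neighborFinset _ _ _).mp hxX
  have hyu : G.Adj y u := ((mem_neighborFinset _ _ _).mp hyX).symm
  set p' := rG.concat hyu with hp'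
  have hp'path : p'.IsPath := by
    rw [Walk.isPath_def, hp', Walk.support_concat, List.nodup_append]
    refine ⟨hrGpath.support_nodup, List.nodup_singleton u, ?_⟩
    intro z hz z' hz' hzz'
    rw [List.mem_singleton] at hz'
    rw [hzz', hz', hrGsup] at hz
    exact hur hz
  have hp'len : p'.length = 2 * k + 1 := by rw [hp', Walk.length_concat, hrGlen]
  have hcyc : (Walk.cons hux p').IsCycle := by
    rw [Walk.cons_isCycle_iff]
    exact ⟨hp'path, myEdgeNotMem hp'path (by omega)⟩
  exact hfree ⟨u, Walk.cons hux p', hcyc, by rw [Walk.length_cons, hp'len]⟩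


end Aux

/-- Let `k ≥ 1` and let `G` be a `C_{2k+2}`-free bipartite graph of order `n ≥ 2k+2`.  Then
for every vertex `u`, the number of walks of length 2 starting at `u` — i.e. the `u`-th row
sum of `A(G)²`, which equals `|N(u)| + e(N(u), N²(u))` — is at most `k(n-k)`. -/
theorem leastEigenvalue_stmt14 (k n : ℕ) (hk : 1 ≤ k) (hn : 2 * k + 2 ≤ n)
    (G : SimpleGraph (Fin n)) [DecidableRel G.Adj] (hbip : _root_.IsBipartite G)
    (hfree : ¬ HasCycleOn G (2 * k + 2)) (u : Fin n) :
    (∑ v : Fin n, ((G.adjMatrix ℝ) * (G.adjMatrix ℝ)) u v ≤ (k * (n - k) : ℕ)) ∧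
      (G.neighborFinset u).card + interEdges G (G.neighborFinset u) (distTwoSet G u) ≤
        k * (n - k) := by
  classical
  obtain ⟨S₀, hS₀⟩ := hbip
  set X := G.neighborFinset u with hXdef
  set D := distTwoSet G u with hDdef
  have hnadj : ∀ {w v : Fin n}, G.Adj u w → G.Adj w v → ¬ G.Adj u v := by
    intro w v h1 h2 h3
    have e1 := hS₀ h1; have e2 := hS₀ h2; have e3 := hS₀ h3
    tauto
  have hsubN : ∀ w ∈ X, G.neighborFinset w = insert u (D.filter fun v => G.Adj w v) := by
    intro w hw
    have huw : G.Adj u w := (mem_neighborFinset _ _ _).mp hw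
    ext v
    rw [mem_neighborFinset, Finset.mem_insert, Finset.mem_filter]
    constructor
    · intro hwv
      by_cases hv : v = u
      · exact Or.inl hv
      · refine Or.inr ⟨?_, hwv⟩
        simp only [hDdef, distTwoSet, Finset.mem_filter]
        exact ⟨Finset.mem_univ v, hnadj huw hwv, hv, w, huw, hwv⟩
    · rintro (rfl | ⟨-, hwv⟩)
      · exact huw.symm
      · exact hwv
  have huD : u ∉ D := by
    simp only [hDdef, distTwoSet, Finset.mem_filter]
    rintro ⟨-, -, h, -⟩
    exact h rfl
  have hudeg : ∀ w ∈ X, G.degree w = 1 + (D.filter fun v => G.Adj w v).card := by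
    intro w hw
    show (G.neighborFinset w).card = _
    rw [hsubN w hw, Finset.card_insert_of_notMem (fun h => huD (Finset.mem_filter.mp h).1)]
    omega
  have hS : (∑ w ∈ X, G.degree w) = X.card + interEdges G X D := by
    rw [Finset.sum_congr rfl hudeg, Finset.sum_add_distrib, Finset.sum_const, smul_eq_mul,
      mul_one]
    congr 1
    rw [interEdges, myCardFilterProd]
  -- identify neighborhoods in the auxiliary graph
  have hN_w : ∀ v ∈ X, (Finset.univ.filter fun w => (auxB G u).Adj v w) = G.neighborFinset v := by
    intro v hv
    ext w
    simp only [Finset.mem_filter, Finset.mem_univ, true_and, mem_neighborFinset]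
    constructor
    · exact fun h => h.1
    · intro hvw
      refine ⟨hvw, Or.inl ⟨hv, ?_⟩⟩
      have : w ∈ G.neighborFinset v := (mem_neighborFinset _ _ _).mpr hvw
      rw [hsubN v hv, Finset.mem_insert] at this
      rcases this with rfl | hmem
      · exact Finset.mem_insert_self _ _
      · exact Finset.mem_insert_of_mem (Finset.mem_filter.mp hmem).1
  have hN_nw : ∀ v, v ∉ X →
      (Finset.univ.filter fun w => (auxB G u).Adj v w) = X.filter fun w => G.Adj v w := by
    intro v hv
    ext w
    simp only [Finset.mem_filter, Finset.mem_univ, true_and]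
    constructor
    · intro h
      rcases h.2 with ⟨hvX, -⟩ | ⟨hwX, -⟩
      · exact absurd hvX hv
      · exact ⟨hwX, h.1⟩
    · rintro ⟨hwX, hvw⟩
      refine ⟨hvw, Or.inr ⟨hwX, ?_⟩⟩
      have : v ∈ G.neighborFinset w := (mem_neighborFinset _ _ _).mpr hvw.symm
      rw [hsubN w hwX, Finset.mem_insert] at this
      rcases this with rfl | hmem
      · exact Finset.mem_insert_self _ _
      · exact Finset.mem_insert_of_mem (Finset.mem_filter.mp hmem).1
  have hXcompl : ∀ w ∈ X, ∀ v, G.Adj w v → v ∉ X := by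
    intro w hw v hwv
    have : v ∈ G.neighborFinset w := (mem_neighborFinset _ _ _).mpr hwv
    rw [hsubN w hw, Finset.mem_insert] at this
    rcases this with rfl | hmem
    · exact fun h => G.irrefl ((mem_neighborFinset _ _ _).mp h)
    · have hvD := (Finset.mem_filter.mp hmem).1
      simp only [hDdef, distTwoSet, Finset.mem_filter] at hvD
      intro hvX
      exact hvD.2.1 ((mem_neighborFinset _ _ _).mp hvX)
  have hEno : eno (auxB G u) Finset.univ = 2 * ∑ w ∈ X, G.degree w := by
    rw [myEnoSum]
    rw [← Finset.sum_filter_add_sum_filter_not Finset.univ (fun v => v ∈ X)]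
    have hset : Finset.univ.filter (fun v => v ∈ X) = X := by ext x; simp
    have h1 : (∑ v ∈ Finset.univ.filter (fun v => v ∈ X),
        ((Finset.univ.filter fun w => (auxB G u).Adj v w)).card) = ∑ w ∈ X, G.degree w := by
      rw [hset]
      exact Finset.sum_congr rfl fun v hv => by rw [hN_w v hv]; rfl
    have h2 : (∑ v ∈ Finset.univ.filter (fun v => v ∉ X),
        ((Finset.univ.filter fun w => (auxB G u).Adj v w)).card) = ∑ w ∈ X, G.degree w := by
      set A := Finset.univ.filter (fun v => v ∉ X) with hA
      have e1 : (∑ v ∈ A, ((Finset.univ.filter fun w => (auxB G u).Adj v w)).card) =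
          ∑ v ∈ A, (X.filter fun w => G.Adj v w).card := by
        apply Finset.sum_congr rfl
        intro v hv
        have hv' : v ∉ X := by
          have := Finset.mem_filter.mp (show v ∈ Finset.univ.filter (fun v => v ∉ X) from hv)
          exact this.2
        rw [hN_nw v hv']
      rw [e1]
      have e2 : (∑ v ∈ A, (X.filter fun w => G.Adj v w).card) =
          ∑ w ∈ X, (A.filter fun v => G.Adj v w).card := by
        simp only [Finset.card_filter]
        exact Finset.sum_comm
      rw [e2]
      apply Finset.sum_congr rfl
      intro w hw
      have : A.filter (fun v => G.Adj v w) = G.neighborFinset w := by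
        ext v
        simp only [hA, Finset.mem_filter, Finset.mem_univ, true_and, mem_neighborFinset]
        constructor
        · rintro ⟨-, hvw⟩
          exact hvw.symm
        · intro hwv
          exact ⟨hXcompl w hw v hwv, hwv.symm⟩
      rw [this]
      rfl
    omega
  have hcard : (Finset.univ : Finset (Fin n)).card = n := by simp
  have hbound := myEnoBound (G := auxB G u) (S := (↑X : Set (Fin n))) (myAuxBbip u) hk
    (myAuxBNoLong hk hfree) Finset.univ (by rw [hcard]; omega)
  rw [hcard, hEno] at hbound
  have hmain : (∑ w ∈ X, G.degree w) ≤ k * (n - k) := by omega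
  constructor
  · have hrow : ∀ w : Fin n, (∑ v, (G.adjMatrix ℝ) w v) = (G.degree w : ℝ) := by
      intro w
      simp [adjMatrix_apply, Finset.sum_boole, neighborFinset_eq_filter, degree]
    have heq : ∑ v : Fin n, ((G.adjMatrix ℝ) * (G.adjMatrix ℝ)) u v
        = ((∑ w ∈ X, G.degree w : ℕ) : ℝ) := by
      simp only [adjMatrix_mul_apply]
      rw [Finset.sum_comm]
      push_cast
      exact Finset.sum_congr rfl fun w _ => hrow w
    rw [heq]
    exact_mod_cast hmain
  · rw [← hS]
    exact hmain
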